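/- Let r ∈ ℕ, let (a_0, …, a_r) be irreducible 𝓑_r-data on a ℂ-vector space M that is infinite-dimensional over ℂ, and let λ ∈ ℂ \ {0}, β ∈ ℂ. Then F(M, Ω(λ,β)) is irreducible: every ℂ-subspace N of M ⊗ ℂ[t] that is invariant under D_m for every m ∈ ℤ satisfies N = 0 or N = M ⊗ ℂ[t]. -/

import Mathlib

open Polynomial TensorProduct

/-- The shift operator `f(t) ↦ f(t - m)` on `ℂ[t]`. -/
noncomputable def shiftOp (m : ℤ) : Module.End ℂ (Polynomial ℂ) :=
  (Polynomial.aeval (Polynomial.X - Polynomial.C (m : ℂ))).toLinearMap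

/-- The operator `X_m^λ : f(t) ↦ λ^m f(t - m)` of `Ω(λ,β)`. -/
noncomputable def XOp (l : ℂ) (m : ℤ) : Module.End ℂ (Polynomial ℂ) :=
  (l ^ m) • shiftOp m

/-- The operator `D_m^{λ,β} : f(t) ↦ λ^m (t - βm) f(t - m)` of `Ω(λ,β)`. -/
noncomputable def DOp (l b : ℂ) (m : ℤ) : Module.End ℂ (Polynomial ℂ) :=
  (l ^ m) • ((LinearMap.mulLeft ℂ (Polynomial.X - Polynomial.C (b * (m : ℂ)))) ∘ₗ shiftOp m)

/-- `𝓑_r`-data on a ℂ-vector space `M`. -/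
structure BrData (r : ℕ) (M : Type*) [AddCommGroup M] [Module ℂ M] where
  a : Fin (r + 1) → Module.End ℂ M
  rel : ∀ i j : Fin (r + 1), ∀ h : (i : ℕ) + (j : ℕ) ≤ r,
    a i * a j - a j * a i
      = (((j : ℕ) : ℂ) - ((i : ℕ) : ℂ)) • a ⟨(i : ℕ) + (j : ℕ), Nat.lt_succ_of_le h⟩
  comm : ∀ i j : Fin (r + 1), r < (i : ℕ) + (j : ℕ) → a i * a j = a j * a i

/-- The operator `g(m) = Σ_{i=0}^r (m^{i+1}/(i+1)!)·a_i`. -/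
noncomputable def gOp {r : ℕ} {M : Type*} [AddCommGroup M] [Module ℂ M]
    (B : BrData r M) (m : ℤ) : Module.End ℂ M :=
  ∑ i : Fin (r + 1), (((m : ℂ) ^ ((i : ℕ) + 1)) / (Nat.factorial ((i : ℕ) + 1) : ℂ)) • B.a i

/-- The operator `D_m` of the Virasoro module `F(M, Ω(λ,β)) = M ⊗ ℂ[t]`:
`D_m(v ⊗ f) = v ⊗ λ^m(t − βm)f(t − m) + g(m)v ⊗ λ^m f(t − m)`. -/
noncomputable def DF {r : ℕ} {M : Type*} [AddCommGroup M] [Module ℂ M]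
    (B : BrData r M) (l b : ℂ) (m : ℤ) : Module.End ℂ (M ⊗[ℂ] Polynomial ℂ) :=
  TensorProduct.map LinearMap.id (DOp l b m) + TensorProduct.map (gOp B m) (XOp l m)

namespace FOmega
open LinearMap


noncomputable def Dpow (k : ℕ) : Module.End ℂ (Polynomial ℂ) :=
  (Polynomial.derivative : Polynomial ℂ →ₗ[ℂ] Polynomial ℂ) ^ k

noncomputable def TX : Module.End ℂ (Polynomial ℂ) := LinearMap.mulLeft ℂ X

lemma Dpow_zero : Dpow 0 = 1 := rfl

lemma Dpow_succ_eq (k : ℕ) :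
    Dpow (k+1) = (Polynomial.derivative : Polynomial ℂ →ₗ[ℂ] Polynomial ℂ) * Dpow k := by
  simp [Dpow, pow_succ']

lemma Dpow_X_pow (k n : ℕ) :
    Dpow k (X ^ n) = (n.descFactorial k : ℂ) • X ^ (n - k) := by
  induction k with
  | zero => simp [Dpow_zero]
  | succ k ih =>
      rw [Dpow_succ_eq, Module.End.mul_apply, ih, map_smul, derivative_X_pow,
        Nat.descFactorial_succ, ← Polynomial.smul_eq_C_mul, smul_smul, ← Nat.sub_sub]
      congr 1
      push_cast
      ring

lemma Dpow_one_poly (k : ℕ) : Dpow k (1 : Polynomial ℂ) = if k = 0 then 1 else 0 := by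
  cases k with
  | zero => simp [Dpow_zero]
  | succ k =>
      have h := Dpow_X_pow (k+1) 0
      simpa using h

lemma D_TX_comm : (Polynomial.derivative : Polynomial ℂ →ₗ[ℂ] Polynomial ℂ) * TX
    = TX * (Polynomial.derivative : Polynomial ℂ →ₗ[ℂ] Polynomial ℂ) + 1 := by
  refine LinearMap.ext fun p => ?_
  simp [TX, Module.End.mul_apply, Polynomial.derivative_mul]
  ring

lemma Dpow_succ_TX (k : ℕ) :
    Dpow (k+1) * TX = TX * Dpow (k+1) + ((k : ℂ) + 1) • Dpow k := by
  induction k with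
  | zero =>
      rw [Dpow_succ_eq, Dpow_zero, mul_one, D_TX_comm]
      simp
  | succ k ih =>
      rw [Dpow_succ_eq (k+1), mul_assoc, ih, mul_add, ← mul_assoc, D_TX_comm, add_mul, one_mul,
        mul_smul_comm, ← Dpow_succ_eq]
      push_cast
      rw [mul_assoc]
      module

lemma Dpow_TX_comm (j : ℕ) :
    Dpow j * TX = TX * Dpow j + (j : ℂ) • Dpow (j - 1) := by
  cases j with
  | zero => simp [Dpow_zero]
  | succ j => simpa using Dpow_succ_TX j



lemma Dpow_mulX (j : ℕ) (f : Polynomial ℂ) :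
    Dpow j (X * f) = X * Dpow j f + (j : ℂ) • Dpow (j - 1) f := by
  have h := LinearMap.congr_fun (Dpow_TX_comm j) f
  simpa [TX, Module.End.mul_apply, LinearMap.mulLeft_apply] using h

variable {r : ℕ} {M : Type*} [AddCommGroup M] [Module ℂ M]

/-- `a_i` extended by zero to all of `ℕ`. -/
noncomputable def aE (B : BrData r M) (i : ℕ) : Module.End ℂ M :=
  if h : i ≤ r then B.a ⟨i, Nat.lt_succ_of_le h⟩ else 0

/-- coefficient operators of the polynomial (in `m`) expansion of `λ^{-m} D_m`. -/
noncomputable def cop (B : BrData r M) (b : ℂ) : ℕ → Module.End ℂ (M ⊗[ℂ] Polynomial ℂ)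
  | 0 => lTensor M TX
  | (k+1) =>
      ((-1 : ℂ)^(k+1) / (Nat.factorial (k+1) : ℂ)) • lTensor M (TX * Dpow (k+1))
      + ((-1 : ℂ)^(k+1) * b / (Nat.factorial k : ℂ)) • lTensor M (Dpow k)
      + ∑ j ∈ Finset.range (k+1),
          ((-1 : ℂ)^j / ((Nat.factorial (k - j + 1) : ℂ) * (Nat.factorial j : ℂ))) •
            TensorProduct.map (aE B (k - j)) (Dpow j)

lemma cop_zero_tmul (B : BrData r M) (b : ℂ) (v : M) (f : Polynomial ℂ) :
    cop B b 0 (v ⊗ₜ[ℂ] f) = v ⊗ₜ[ℂ] (X * f) := by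
  simp [cop, TX]

lemma cop_succ_tmul (B : BrData r M) (b : ℂ) (k : ℕ) (v : M) (f : Polynomial ℂ) :
    cop B b (k+1) (v ⊗ₜ[ℂ] f) =
      ((-1 : ℂ)^(k+1) / (Nat.factorial (k+1) : ℂ)) • (v ⊗ₜ[ℂ] (X * Dpow (k+1) f))
      + ((-1 : ℂ)^(k+1) * b / (Nat.factorial k : ℂ)) • (v ⊗ₜ[ℂ] Dpow k f)
      + ∑ j ∈ Finset.range (k+1),
          ((-1 : ℂ)^j / ((Nat.factorial (k - j + 1) : ℂ) * (Nat.factorial j : ℂ))) •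
            ((aE B (k - j) v) ⊗ₜ[ℂ] Dpow j f) := by
  simp [cop, TX, Module.End.mul_apply]

lemma coeff_cancel (k j : ℕ) (hj : j < k) :
    ((-1 : ℂ)^(j+1) / ((Nat.factorial (k - (j+1) + 1) : ℂ) * (Nat.factorial (j+1) : ℂ))) * ((j:ℂ)+1)
      + (-1 : ℂ)^j / ((Nat.factorial (k - 1 - j + 1) : ℂ) * (Nat.factorial j : ℂ)) = 0 := by
  have h1 : k - (j+1) + 1 = k - j := by omega
  have h2 : k - 1 - j + 1 = k - j := by omega
  rw [h1, h2, Nat.factorial_succ]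
  have hf : ((Nat.factorial (k-j) : ℂ)) ≠ 0 := Nat.cast_ne_zero.2 (Nat.factorial_ne_zero _)
  have hf2 : ((Nat.factorial j : ℂ)) ≠ 0 := Nat.cast_ne_zero.2 (Nat.factorial_ne_zero _)
  have hj1 : ((j:ℂ) + 1) ≠ 0 := by
    have : ((j:ℂ)+1) = ((j+1 : ℕ) : ℂ) := by push_cast; ring
    rw [this]; exact Nat.cast_ne_zero.2 (by omega)
  push_cast
  field_simp
  ring


lemma TX_apply (f : Polynomial ℂ) : TX f = X * f := rfl


lemma coeff_cancel2 (k x : ℕ) :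
    ((-1:ℂ)^(x+1) / ((Nat.factorial (k - x + 1) : ℂ) * (Nat.factorial (x+1) : ℂ))) * ((x+1 : ℕ) : ℂ)
      = -((-1:ℂ)^x / ((Nat.factorial (k - x + 1) : ℂ) * (Nat.factorial x : ℂ))) := by
  have hf : ((Nat.factorial (k-x+1) : ℂ)) ≠ 0 := Nat.cast_ne_zero.2 (Nat.factorial_ne_zero _)
  have hf2 : ((Nat.factorial x : ℂ)) ≠ 0 := Nat.cast_ne_zero.2 (Nat.factorial_ne_zero _)
  have hx1 : ((x:ℂ) + 1) ≠ 0 := by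
    have : ((x:ℂ)+1) = ((x+1 : ℕ) : ℂ) := by push_cast; ring
    rw [this]; exact Nat.cast_ne_zero.2 (by omega)
  have hfs : ((Nat.factorial (x+1) : ℕ) : ℂ) = ((x:ℂ)+1) * (Nat.factorial x : ℂ) := by
    rw [Nat.factorial_succ]; push_cast; ring
  rw [hfs]
  field_simp
  push_cast
  ring

set_option maxHeartbeats 1000000 in
lemma cop_step (B : BrData r M) (b : ℂ) (k : ℕ) (v : M) (f : Polynomial ℂ) :
    cop B b (k+1) (v ⊗ₜ[ℂ] (X * f)) + cop B b k (v ⊗ₜ[ℂ] f)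
      = LinearMap.lTensor M TX (cop B b (k+1) (v ⊗ₜ[ℂ] f)) := by
  cases k with
  | zero =>
      simp only [cop_succ_tmul, cop_zero_tmul, Dpow_mulX, map_add, map_smul, map_sum,
        LinearMap.lTensor_tmul, TX_apply, tmul_add, tmul_smul, smul_add, smul_smul,
        Finset.sum_add_distrib, mul_add, mul_smul_comm]
      norm_num [Finset.sum_range_one, Dpow_zero, Module.End.one_apply]
      module
  | succ k =>
      simp only [cop_succ_tmul, Dpow_mulX, map_add, map_smul, map_sum,
        LinearMap.lTensor_tmul, TX_apply, tmul_add, tmul_smul, smul_add, smul_smul,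
        Finset.sum_add_distrib, mul_add, mul_smul_comm]
      simp only [Nat.add_sub_cancel]
      have hsplit : (∑ x ∈ Finset.range (k + 1 + 1),
            ((-1:ℂ) ^ x / (↑(k + 1 - x + 1).factorial * ↑x.factorial) * ↑x) •
              (aE B (k + 1 - x)) v ⊗ₜ[ℂ] (Dpow (x - 1)) f)
          = - ∑ j ∈ Finset.range (k + 1),
              ((-1:ℂ) ^ j / (↑(k - j + 1).factorial * ↑j.factorial)) •
                (aE B (k - j)) v ⊗ₜ[ℂ] (Dpow j) f := by
        rw [Finset.sum_range_succ']
        simp only [Nat.succ_sub_succ, Nat.add_sub_cancel, Nat.cast_zero, mul_zero, zero_smul,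
          add_zero, Nat.sub_zero]
        rw [eq_neg_iff_add_eq_zero, ← Finset.sum_add_distrib]
        apply Finset.sum_eq_zero
        intro x hx
        rw [← add_smul, coeff_cancel2, neg_add_cancel, zero_smul]
      have eα : ((-1:ℂ)) ^ (k + 1 + 1) / ↑(k + 1 + 1).factorial * ((k + 1 + 1 : ℕ) : ℂ)
          = -(((-1:ℂ)) ^ (k + 1) / ↑(k + 1).factorial) := by
        have := coeff_cancel2 (x := k+1) (k := 0)
        simpa [Nat.factorial] using this
      have eβ : (-1:ℂ) ^ (k + 1 + 1) * b / ↑(k + 1).factorial * ((k + 1 : ℕ) : ℂ)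
          = -((-1:ℂ) ^ (k + 1) * b / ↑k.factorial) := by
        have hf2 : ((Nat.factorial k : ℂ)) ≠ 0 := Nat.cast_ne_zero.2 (Nat.factorial_ne_zero _)
        have hk1 : ((k:ℂ) + 1) ≠ 0 := by
          have : ((k:ℂ)+1) = ((k+1 : ℕ) : ℂ) := by push_cast; ring
          rw [this]; exact Nat.cast_ne_zero.2 (by omega)
        rw [Nat.factorial_succ]
        push_cast
        field_simp
        ring
      rw [hsplit, eα, eβ]
      module

noncomputable def Eop (B : BrData r M) (b : ℂ) (m : ℤ) : Module.End ℂ (M ⊗[ℂ] Polynomial ℂ) :=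
  LinearMap.lTensor M ((LinearMap.mulLeft ℂ (X - C (b * (m:ℂ)))) ∘ₗ shiftOp m)
    + TensorProduct.map (gOp B m) (shiftOp m)

lemma DF_eq (B : BrData r M) (l b : ℂ) (m : ℤ) : DF B l b m = (l ^ m) • Eop B b m := by
  unfold DF DOp XOp Eop
  rw [TensorProduct.map_smul_right, TensorProduct.map_smul_right, smul_add]
  rfl

lemma shift_mulX (m : ℤ) (f : Polynomial ℂ) :
    shiftOp m (X * f) = (X - C (m:ℂ)) * shiftOp m f := by
  simp [shiftOp]

lemma Eop_tmul (B : BrData r M) (b : ℂ) (m : ℤ) (v : M) (f : Polynomial ℂ) :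
    Eop B b m (v ⊗ₜ[ℂ] f)
      = v ⊗ₜ[ℂ] ((X - C (b * (m:ℂ))) * shiftOp m f) + (gOp B m v) ⊗ₜ[ℂ] (shiftOp m f) := by
  simp [Eop]

lemma Eop_step (B : BrData r M) (b : ℂ) (m : ℤ) (u : M ⊗[ℂ] Polynomial ℂ) :
    Eop B b m (LinearMap.lTensor M TX u)
      = LinearMap.lTensor M TX (Eop B b m u) - ((m:ℂ)) • Eop B b m u := by
  have h : Eop B b m ∘ₗ LinearMap.lTensor M TX
      = LinearMap.lTensor M TX ∘ₗ Eop B b m - ((m:ℂ)) • Eop B b m := by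
    apply TensorProduct.ext'
    intro v f
    simp only [LinearMap.comp_apply, LinearMap.sub_apply, LinearMap.smul_apply,
      LinearMap.lTensor_tmul, TX_apply, Eop_tmul, shift_mulX]
    have hCm : ∀ p : Polynomial ℂ, (X - C (m:ℂ)) * p = X * p - (m:ℂ) • p := by
      intro p; rw [sub_mul, Polynomial.smul_eq_C_mul]
    simp only [hCm, mul_sub, mul_left_comm, mul_smul_comm, map_sub, map_smul, tmul_sub,
      tmul_smul, smul_add, smul_sub, LinearMap.lTensor_tmul, TX_apply, map_add]
    abel
  exact (LinearMap.congr_fun h u).trans rfl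

lemma cop_succ_tmul_one (B : BrData r M) (b : ℂ) (k : ℕ) (v : M) :
    cop B b (k+1) (v ⊗ₜ[ℂ] (1 : Polynomial ℂ))
      = (if k = 0 then (-b) • (v ⊗ₜ[ℂ] (1 : Polynomial ℂ)) else 0)
        + (1/((Nat.factorial (k+1) : ℂ))) • (aE B k v ⊗ₜ[ℂ] (1 : Polynomial ℂ)) := by
  rw [cop_succ_tmul]
  have h1 : Dpow (k+1) (1 : Polynomial ℂ) = 0 := by rw [Dpow_one_poly]; simp
  have hsum : ∑ j ∈ Finset.range (k+1),
        ((-1 : ℂ)^j / ((Nat.factorial (k - j + 1) : ℂ) * (Nat.factorial j : ℂ))) •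
          ((aE B (k - j) v) ⊗ₜ[ℂ] Dpow j (1 : Polynomial ℂ))
      = (1/((Nat.factorial (k+1) : ℂ))) • (aE B k v ⊗ₜ[ℂ] (1 : Polynomial ℂ)) := by
    rw [Finset.sum_eq_single 0]
    · simp [Dpow_zero]
    · intro j hj hj0
      rw [Dpow_one_poly, if_neg hj0]
      simp
    · intro h; simp at h
  rw [h1, hsum]
  cases k with
  | zero =>
      simp [Dpow_zero, Nat.factorial]
  | succ k =>
      simp [Dpow_one_poly]

lemma cop_step' (B : BrData r M) (b : ℂ) (k : ℕ) (u : M ⊗[ℂ] Polynomial ℂ) :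
    cop B b (k+1) (LinearMap.lTensor M TX u)
      = LinearMap.lTensor M TX (cop B b (k+1) u) - cop B b k u := by
  have h : cop B b (k+1) ∘ₗ LinearMap.lTensor M TX + cop B b k
      = LinearMap.lTensor M TX ∘ₗ cop B b (k+1) := by
    apply TensorProduct.ext'
    intro v f
    simpa [TX_apply] using cop_step B b k v f
  have := LinearMap.congr_fun h u
  simp only [LinearMap.add_apply, LinearMap.comp_apply] at this
  rw [eq_sub_iff_add_eq, this]

lemma sum_extend {V : Type*} [AddCommGroup V] [Module ℂ V] {w : ℕ → V} {K0 K : ℕ}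
    (hK : K0 ≤ K) (h0 : ∀ k, K0 ≤ k → w k = 0) :
    ∑ k ∈ Finset.range K, w k = ∑ k ∈ Finset.range K0, w k :=
  (Finset.sum_subset (Finset.range_subset_range.2 hK)
    (fun x _ hx => h0 x (by simpa using hx))).symm

lemma aE_coe (B : BrData r M) (i : Fin (r+1)) : aE B (i : ℕ) = B.a i := by
  have hi : (i : ℕ) ≤ r := Fin.is_le i
  simp [aE, hi]

lemma shift_one (m : ℤ) : shiftOp m (1 : Polynomial ℂ) = 1 := by
  simp [shiftOp]

lemma base_vanish (B : BrData r M) (b : ℂ) (v : M) :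
    ∀ k, r + 2 ≤ k → cop B b k (v ⊗ₜ[ℂ] (1 : Polynomial ℂ)) = 0 := by
  intro k hk
  obtain ⟨k', rfl⟩ : ∃ k', k = k' + 1 := ⟨k - 1, by omega⟩
  rw [cop_succ_tmul_one]
  have h1 : k' ≠ 0 := by omega
  have h2 : ¬ (k' ≤ r) := by omega
  rw [if_neg h1, aE]
  rw [dif_neg h2]
  simp

lemma base_sum (B : BrData r M) (b : ℂ) (m : ℤ) (v : M) :
    Eop B b m (v ⊗ₜ[ℂ] (1 : Polynomial ℂ))
      = ∑ k ∈ Finset.range (r+2), ((m:ℂ))^k • cop B b k (v ⊗ₜ[ℂ] (1 : Polynomial ℂ)) := by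
  rw [Finset.sum_range_succ']
  rw [Finset.sum_range_succ']
  simp only [pow_zero, one_smul, cop_zero_tmul, mul_one]
  have hterm : ∀ k : ℕ, ((m:ℂ))^(k+1+1) • cop B b (k+1+1) (v ⊗ₜ[ℂ] (1 : Polynomial ℂ))
      = ((m:ℂ)^(k+1+1) / (Nat.factorial (k+1+1) : ℂ)) • (aE B (k+1) v ⊗ₜ[ℂ] (1 : Polynomial ℂ)) := by
    intro k
    rw [cop_succ_tmul_one, if_neg (Nat.succ_ne_zero k), zero_add, smul_smul, mul_one_div]
  have hcop1 : ((m:ℂ))^(0+1) • cop B b (0+1) (v ⊗ₜ[ℂ] (1 : Polynomial ℂ))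
      = (-(b*(m:ℂ))) • (v ⊗ₜ[ℂ] (1 : Polynomial ℂ))
        + ((m:ℂ)^(0+1) / (Nat.factorial (0+1) : ℂ)) • (aE B 0 v ⊗ₜ[ℂ] (1 : Polynomial ℂ)) := by
    rw [cop_succ_tmul_one, if_pos rfl]
    rw [smul_add, smul_smul, smul_smul, mul_one_div]
    ring_nf
  rw [hcop1]
  rw [Finset.sum_congr rfl (fun k _ => hterm k)]
  -- right side: Eop
  rw [Eop_tmul, shift_one, mul_one]
  have hC : (X - C (b * (m:ℂ))) = X - (b*(m:ℂ)) • (1 : Polynomial ℂ) := by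
    rw [Polynomial.smul_eq_C_mul, mul_one]
  rw [hC, tmul_sub, tmul_smul]
  have hg : (gOp B m v) ⊗ₜ[ℂ] (1 : Polynomial ℂ)
      = ∑ k ∈ Finset.range (r+1),
          ((m:ℂ)^(k+1) / (Nat.factorial (k+1) : ℂ)) • (aE B k v ⊗ₜ[ℂ] (1 : Polynomial ℂ)) := by
    rw [gOp, ← Fin.sum_univ_eq_sum_range
      (fun k => ((m:ℂ)^(k+1) / (Nat.factorial (k+1) : ℂ)) • (aE B k v ⊗ₜ[ℂ] (1 : Polynomial ℂ)))]
    rw [LinearMap.sum_apply, sum_tmul]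
    apply Finset.sum_congr rfl
    intro i _
    rw [aE_coe, LinearMap.smul_apply, smul_tmul']
  rw [hg, Finset.sum_range_succ']
  module

lemma key_identity (B : BrData r M) (b : ℂ) (u : M ⊗[ℂ] Polynomial ℂ) :
    ∃ K0 : ℕ, (∀ k, K0 ≤ k → cop B b k u = 0) ∧
      ∀ m : ℤ, Eop B b m u = ∑ k ∈ Finset.range K0, ((m:ℂ))^k • cop B b k u := by
  induction u using TensorProduct.induction_on with
  | zero => exact ⟨0, fun k _ => by simp, fun m => by simp⟩
  | add u u' hu hu' =>
      obtain ⟨K1, h1, hs1⟩ := hu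
      obtain ⟨K2, h2, hs2⟩ := hu'
      refine ⟨max K1 K2, fun k hk => ?_, fun m => ?_⟩
      · rw [map_add, h1 k (le_trans (le_max_left _ _) hk), h2 k (le_trans (le_max_right _ _) hk),
          add_zero]
      · have e1 : ∑ k ∈ Finset.range (max K1 K2), ((m:ℂ))^k • cop B b k u
            = ∑ k ∈ Finset.range K1, ((m:ℂ))^k • cop B b k u :=
          sum_extend (le_max_left _ _) (fun k hk => by rw [h1 k hk, smul_zero])
        have e2 : ∑ k ∈ Finset.range (max K1 K2), ((m:ℂ))^k • cop B b k u'
            = ∑ k ∈ Finset.range K2, ((m:ℂ))^k • cop B b k u' :=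
          sum_extend (le_max_right _ _) (fun k hk => by rw [h2 k hk, smul_zero])
        rw [map_add, hs1 m, hs2 m, ← e1, ← e2, ← Finset.sum_add_distrib]
        apply Finset.sum_congr rfl
        intro k _
        rw [map_add, smul_add]
  | tmul v f =>
      induction f using Polynomial.induction_on' with
      | add p q hp hq =>
          obtain ⟨K1, h1, hs1⟩ := hp
          obtain ⟨K2, h2, hs2⟩ := hq
          refine ⟨max K1 K2, fun k hk => ?_, fun m => ?_⟩
          · rw [tmul_add, map_add, h1 k (le_trans (le_max_left _ _) hk),
              h2 k (le_trans (le_max_right _ _) hk), add_zero]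
          · have e1 : ∑ k ∈ Finset.range (max K1 K2), ((m:ℂ))^k • cop B b k (v ⊗ₜ[ℂ] p)
                = ∑ k ∈ Finset.range K1, ((m:ℂ))^k • cop B b k (v ⊗ₜ[ℂ] p) :=
              sum_extend (le_max_left _ _) (fun k hk => by rw [h1 k hk, smul_zero])
            have e2 : ∑ k ∈ Finset.range (max K1 K2), ((m:ℂ))^k • cop B b k (v ⊗ₜ[ℂ] q)
                = ∑ k ∈ Finset.range K2, ((m:ℂ))^k • cop B b k (v ⊗ₜ[ℂ] q) :=
              sum_extend (le_max_right _ _) (fun k hk => by rw [h2 k hk, smul_zero])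
            rw [tmul_add, map_add, hs1 m, hs2 m, ← e1, ← e2, ← Finset.sum_add_distrib]
            apply Finset.sum_congr rfl
            intro k _
            rw [map_add, smul_add]
      | monomial n a =>
          -- reduce to v ⊗ X^n
          have hX : ∀ n : ℕ, ∃ K0 : ℕ, (∀ k, K0 ≤ k → cop B b k (v ⊗ₜ[ℂ] (X^n : Polynomial ℂ)) = 0) ∧
              ∀ m : ℤ, Eop B b m (v ⊗ₜ[ℂ] (X^n : Polynomial ℂ))
                = ∑ k ∈ Finset.range K0, ((m:ℂ))^k • cop B b k (v ⊗ₜ[ℂ] (X^n : Polynomial ℂ)) := by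
            intro n
            induction n with
            | zero => exact ⟨r+2, fun k hk => by simpa using base_vanish B b v k hk,
                fun m => by simpa using base_sum B b m v⟩
            | succ n ih =>
                obtain ⟨K0, h0, hs⟩ := ih
                have hT : (v ⊗ₜ[ℂ] (X^(n+1) : Polynomial ℂ))
                    = LinearMap.lTensor M TX (v ⊗ₜ[ℂ] (X^n : Polynomial ℂ)) := by
                  rw [LinearMap.lTensor_tmul, TX_apply, ← pow_succ']
                refine ⟨K0 + 1, fun k hk => ?_, fun m => ?_⟩
                · obtain ⟨k', rfl⟩ : ∃ k', k = k' + 1 := ⟨k - 1, by omega⟩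
                  rw [hT, cop_step', h0 k' (by omega), h0 (k'+1) (by omega), map_zero, sub_zero]
                · rw [hT, Eop_step, hs m]
                  rw [Finset.sum_range_succ']
                  have hz : cop B b 0 (LinearMap.lTensor M TX (v ⊗ₜ[ℂ] (X^n : Polynomial ℂ)))
                      = LinearMap.lTensor M TX (cop B b 0 (v ⊗ₜ[ℂ] (X^n : Polynomial ℂ))) := rfl
                  have hterm : ∀ k : ℕ,
                      ((m:ℂ))^(k+1) • cop B b (k+1)
                          (LinearMap.lTensor M TX (v ⊗ₜ[ℂ] (X^n : Polynomial ℂ)))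
                        = ((m:ℂ))^(k+1) • LinearMap.lTensor M TX
                            (cop B b (k+1) (v ⊗ₜ[ℂ] (X^n : Polynomial ℂ)))
                          - (m:ℂ) • (((m:ℂ))^k • cop B b k (v ⊗ₜ[ℂ] (X^n : Polynomial ℂ))) := by
                    intro k
                    rw [cop_step', smul_sub, smul_smul, ← pow_succ']
                  rw [Finset.sum_congr rfl (fun k _ => hterm k), Finset.sum_sub_distrib, hz,
                    pow_zero, one_smul, ← Finset.smul_sum]
                  have hTsum : ∑ k ∈ Finset.range K0, ((m:ℂ))^(k+1) • LinearMap.lTensor M TX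
                        (cop B b (k+1) (v ⊗ₜ[ℂ] (X^n : Polynomial ℂ)))
                      + LinearMap.lTensor M TX (cop B b 0 (v ⊗ₜ[ℂ] (X^n : Polynomial ℂ)))
                      = LinearMap.lTensor M TX
                          (∑ k ∈ Finset.range K0, ((m:ℂ))^k • cop B b k (v ⊗ₜ[ℂ] (X^n : Polynomial ℂ))) := by
                    have e1 : ∀ k ∈ Finset.range K0, ((m:ℂ))^(k+1) • LinearMap.lTensor M TX
                          (cop B b (k+1) (v ⊗ₜ[ℂ] (X^n : Polynomial ℂ)))
                        = LinearMap.lTensor M TX (((m:ℂ))^(k+1) • cop B b (k+1) (v ⊗ₜ[ℂ] (X^n : Polynomial ℂ))) :=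
                      fun k _ => (map_smul _ _ _).symm
                    rw [Finset.sum_congr rfl e1]
                    have e2 : LinearMap.lTensor M TX (cop B b 0 (v ⊗ₜ[ℂ] (X^n : Polynomial ℂ)))
                        = LinearMap.lTensor M TX (((m:ℂ))^0 • cop B b 0 (v ⊗ₜ[ℂ] (X^n : Polynomial ℂ))) := by
                      rw [pow_zero, one_smul]
                    rw [e2, ← Finset.sum_range_succ'
                      (fun j => LinearMap.lTensor M TX (((m:ℂ))^j • cop B b j (v ⊗ₜ[ℂ] (X^n : Polynomial ℂ)))) K0]
                    rw [Finset.sum_range_succ, h0 K0 le_rfl, smul_zero, map_zero, add_zero, ← map_sum]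
                  rw [← hTsum]
                  abel
          obtain ⟨K0, h0, hs⟩ := hX n
          have hmono : (v ⊗ₜ[ℂ] (monomial n a : Polynomial ℂ)) = a • (v ⊗ₜ[ℂ] (X^n : Polynomial ℂ)) := by
            rw [← Polynomial.smul_X_eq_monomial, tmul_smul]
          refine ⟨K0, fun k hk => ?_, fun m => ?_⟩
          · rw [hmono, map_smul, h0 k hk, smul_zero]
          · rw [hmono, map_smul, hs m, Finset.smul_sum]
            apply Finset.sum_congr rfl
            intro k _
            rw [map_smul, smul_comm]

lemma vander {V : Type*} [AddCommGroup V] [Module ℂ V] (N : Submodule ℂ V) (K : ℕ) (w : ℕ → V)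
    (h : ∀ m : ℤ, (∑ k ∈ Finset.range K, ((m:ℂ))^k • w k) ∈ N) : ∀ k, k < K → w k ∈ N := by
  intro k0 hk0
  set A : Matrix (Fin K) (Fin K) ℂ := Matrix.vandermonde (fun i => ((i : ℕ) : ℂ)) with hA
  have hdet : IsUnit A.det := by
    rw [hA, Matrix.det_vandermonde]
    apply isUnit_iff_ne_zero.2
    apply Finset.prod_ne_zero_iff.2
    intro i _
    apply Finset.prod_ne_zero_iff.2
    intro j hj
    have hij : i < j := Finset.mem_Ioi.1 hj
    have hij' : (i : ℕ) < (j : ℕ) := hij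
    have : ((i : ℕ) : ℂ) ≠ ((j : ℕ) : ℂ) := by
      simp only [ne_eq, Nat.cast_inj]
      omega
    exact sub_ne_zero.2 (Ne.symm this)
  have hAi : A⁻¹ * A = 1 := Matrix.nonsing_inv_mul A hdet
  set jj : Fin K := ⟨k0, hk0⟩ with hjj
  have key : (∑ i : Fin K, (A⁻¹ jj i) •
      (∑ k ∈ Finset.range K, ((((i:ℕ):ℤ):ℂ))^k • w k)) = w k0 := by
    calc ∑ i : Fin K, (A⁻¹ jj i) • (∑ k ∈ Finset.range K, ((((i:ℕ):ℤ):ℂ))^k • w k)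
        = ∑ i : Fin K, ∑ k : Fin K, (A⁻¹ jj i * A i k) • w (k:ℕ) := by
          apply Finset.sum_congr rfl; intro i _
          rw [← Fin.sum_univ_eq_sum_range (fun k => ((((i:ℕ):ℤ):ℂ))^k • w k) K, Finset.smul_sum]
          apply Finset.sum_congr rfl; intro k _
          rw [smul_smul]
          congr 1
      _ = ∑ k : Fin K, (∑ i : Fin K, A⁻¹ jj i * A i k) • w (k:ℕ) := by
          rw [Finset.sum_comm]
          apply Finset.sum_congr rfl; intro k _
          rw [Finset.sum_smul]
      _ = ∑ k : Fin K, ((A⁻¹ * A) jj k) • w (k:ℕ) := by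
          apply Finset.sum_congr rfl; intro k _
          rw [Matrix.mul_apply]
      _ = w k0 := by
          rw [hAi]
          have : ∀ k : Fin K, ((1 : Matrix (Fin K) (Fin K) ℂ) jj k) • w (k:ℕ)
              = if jj = k then w (k : ℕ) else 0 := by
            intro k
            rw [Matrix.one_apply]
            split <;> simp
          rw [Finset.sum_congr rfl (fun k _ => this k), Finset.sum_ite_eq]
          simp [hjj]
  rw [← key]
  apply Submodule.sum_smul_mem
  intro i _
  exact h ((i:ℕ):ℤ)

lemma cop_mem (B : BrData r M) (l b : ℂ) (hl : l ≠ 0) (N : Submodule ℂ (M ⊗[ℂ] Polynomial ℂ))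
    (hN : ∀ m : ℤ, ∀ u ∈ N, DF B l b m u ∈ N) :
    ∀ u ∈ N, ∀ k, cop B b k u ∈ N := by
  intro u hu k
  obtain ⟨K0, h0, hs⟩ := key_identity B b u
  by_cases hk : k < K0
  · refine vander N K0 (fun k => cop B b k u) (fun m => ?_) k hk
    rw [← hs m]
    have h2 : Eop B b m u = (l ^ m)⁻¹ • DF B l b m u := by
      rw [DF_eq, LinearMap.smul_apply, smul_smul, inv_mul_cancel₀ (zpow_ne_zero m hl), one_smul]
    rw [h2]
    exact N.smul_mem _ (hN m u hu)
  · rw [h0 k (le_of_not_gt hk)]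
    exact N.zero_mem

/-! ### Part 2: coefficients -/

noncomputable def coeffT (n : ℕ) : M ⊗[ℂ] Polynomial ℂ →ₗ[ℂ] M :=
  (TensorProduct.rid ℂ M).toLinearMap ∘ₗ (LinearMap.lTensor M (Polynomial.lcoeff ℂ n))

lemma coeffT_tmul (n : ℕ) (v : M) (f : Polynomial ℂ) :
    coeffT n (v ⊗ₜ[ℂ] f) = f.coeff n • v := by
  simp [coeffT]

lemma coeffT_tmul_pow (n s : ℕ) (v : M) :
    coeffT n (v ⊗ₜ[ℂ] (X^s : Polynomial ℂ)) = if s = n then v else 0 := by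
  rw [coeffT_tmul, Polynomial.coeff_X_pow]
  rcases eq_or_ne s n with h | h
  · subst h; simp
  · simp [h, Ne.symm h]

/-- every element is a finite sum of its coefficients tensored with monomials -/
lemma repr_exists (u : M ⊗[ℂ] Polynomial ℂ) :
    ∃ D : ℕ, (∀ j, D ≤ j → coeffT j u = 0) ∧
      u = ∑ j ∈ Finset.range D, (coeffT j u) ⊗ₜ[ℂ] (X^j : Polynomial ℂ) := by
  induction u using TensorProduct.induction_on with
  | zero => exact ⟨0, fun j _ => by simp, by simp⟩
  | tmul v f =>
      refine ⟨f.natDegree + 1, fun j hj => ?_, ?_⟩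
      · rw [coeffT_tmul, Polynomial.coeff_eq_zero_of_natDegree_lt (by omega), zero_smul]
      · conv_lhs => rw [Polynomial.as_sum_range' f (f.natDegree + 1) (Nat.lt_succ_self _)]
        rw [tmul_sum]
        apply Finset.sum_congr rfl
        intro j _
        rw [coeffT_tmul, ← Polynomial.smul_X_eq_monomial, tmul_smul, smul_tmul']
  | add u u' hu hu' =>
      obtain ⟨D1, h1, e1⟩ := hu
      obtain ⟨D2, h2, e2⟩ := hu'
      refine ⟨max D1 D2, fun j hj => ?_, ?_⟩
      · rw [map_add, h1 j (le_trans (le_max_left _ _) hj), h2 j (le_trans (le_max_right _ _) hj),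
          add_zero]
      · have e1' : u = ∑ j ∈ Finset.range (max D1 D2), (coeffT j u) ⊗ₜ[ℂ] (X^j : Polynomial ℂ) := by
          rw [sum_extend (le_max_left D1 D2) (fun j hj => by rw [h1 j hj, zero_tmul])]
          exact e1
        have e2' : u' = ∑ j ∈ Finset.range (max D1 D2), (coeffT j u') ⊗ₜ[ℂ] (X^j : Polynomial ℂ) := by
          rw [sum_extend (le_max_right D1 D2) (fun j hj => by rw [h2 j hj, zero_tmul])]
          exact e2
        conv_lhs => rw [e1', e2']
        rw [← Finset.sum_add_distrib]
        apply Finset.sum_congr rfl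
        intro j _
        rw [map_add, add_tmul]

/-- reconstruction from coefficients, given a degree bound -/
lemma repr_of_degLE (u : M ⊗[ℂ] Polynomial ℂ) (e : ℕ) (h : ∀ j, e < j → coeffT j u = 0) :
    u = ∑ j ∈ Finset.range (e+1), (coeffT j u) ⊗ₜ[ℂ] (X^j : Polynomial ℂ) := by
  obtain ⟨D, hD, hrep⟩ := repr_exists u
  by_cases hDe : D ≤ e + 1
  · rw [sum_extend hDe (fun j hj => by rw [hD j hj, zero_tmul])]
    exact hrep
  · conv_lhs => rw [hrep]
    rw [sum_extend (le_of_not_ge hDe) (fun j hj => by rw [h j (by omega), zero_tmul])]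

lemma eq_zero_of_coeffT (u : M ⊗[ℂ] Polynomial ℂ) (h : ∀ j, coeffT j u = 0) : u = 0 := by
  rw [repr_of_degLE u 0 (fun j _ => h j)]
  simp [h]

lemma tensor_ext_mono {F G : M ⊗[ℂ] Polynomial ℂ →ₗ[ℂ] M} 
    (h : ∀ (v : M) (s : ℕ), F (v ⊗ₜ[ℂ] (X^s : Polynomial ℂ)) = G (v ⊗ₜ[ℂ] (X^s : Polynomial ℂ))) :
    F = G := by
  apply TensorProduct.ext'
  intro v f
  induction f using Polynomial.induction_on' with
  | add p q hp hq => rw [tmul_add, map_add, map_add, hp, hq]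
  | monomial s a => rw [← Polynomial.smul_X_eq_monomial, tmul_smul, map_smul, map_smul, h]

lemma coeffT_map_Dpow (g : Module.End ℂ M) (j n : ℕ) (u : M ⊗[ℂ] Polynomial ℂ) :
    coeffT n (TensorProduct.map g (Dpow j) u)
      = (((n+j).descFactorial j : ℕ) : ℂ) • g (coeffT (n+j) u) := by
  have h : coeffT n ∘ₗ TensorProduct.map g (Dpow j)
      = (((n+j).descFactorial j : ℕ) : ℂ) • (g ∘ₗ coeffT (n+j)) := by
    apply tensor_ext_mono
    intro v s
    simp only [LinearMap.comp_apply, LinearMap.smul_apply, TensorProduct.map_tmul]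
    rw [Dpow_X_pow, tmul_smul, map_smul, coeffT_tmul_pow, coeffT_tmul_pow]
    rcases Nat.lt_or_ge s j with hs | hs
    · have h0 : (s.descFactorial j) = 0 := Nat.descFactorial_eq_zero_iff_lt.2 hs
      have h1 : s ≠ n + j := by omega
      simp [h0, h1]
    · by_cases h1 : s = n + j
      · subst h1
        have h2 : n + j - j = n := by omega
        simp [h2]
      · have h2 : s - j ≠ n := by omega
        simp [h1, h2]
  exact LinearMap.congr_fun h u

lemma coeffT_lTensor_Dpow (j n : ℕ) (u : M ⊗[ℂ] Polynomial ℂ) :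
    coeffT n (LinearMap.lTensor M (Dpow j) u)
      = (((n+j).descFactorial j : ℕ) : ℂ) • coeffT (n+j) u := by
  have : LinearMap.lTensor M (Dpow j) = TensorProduct.map (LinearMap.id) (Dpow j) := rfl
  rw [this, coeffT_map_Dpow]
  rfl

lemma coeffT_lTensor_TXDpow (j n : ℕ) (hj : 1 ≤ j) (u : M ⊗[ℂ] Polynomial ℂ) :
    coeffT n (LinearMap.lTensor M (TX * Dpow j) u)
      = (((n+j-1).descFactorial j : ℕ) : ℂ) • coeffT (n+j-1) u := by
  have h : coeffT n ∘ₗ LinearMap.lTensor M (TX * Dpow j)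
      = (((n+j-1).descFactorial j : ℕ) : ℂ) • (coeffT (n+j-1)) := by
    apply tensor_ext_mono
    intro v s
    simp only [LinearMap.comp_apply, LinearMap.smul_apply, LinearMap.lTensor_tmul,
      Module.End.mul_apply]
    rw [Dpow_X_pow, map_smul, TX_apply, ← pow_succ', tmul_smul, map_smul, coeffT_tmul_pow,
      coeffT_tmul_pow]
    rcases Nat.lt_or_ge s j with hs | hs
    · have h0 : (s.descFactorial j) = 0 := Nat.descFactorial_eq_zero_iff_lt.2 hs
      by_cases h1 : s = n + j - 1
      · have h2 : ((n+j-1).descFactorial j) = 0 := by rw [← h1]; exact h0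
        simp [h0, h2]
      · simp [h0, h1]
    · by_cases h1 : s = n + j - 1
      · subst h1
        have h2 : n + j - 1 - j + 1 = n := by omega
        simp [h2]
      · have h2 : s - j + 1 ≠ n := by omega
        simp [h1, h2]
  exact LinearMap.congr_fun h u

/-- master coefficient formula -/
lemma coeffT_cop_succ (B : BrData r M) (b : ℂ) (k n : ℕ) (u : M ⊗[ℂ] Polynomial ℂ) :
    coeffT n (cop B b (k+1) u)
      = ((-1 : ℂ)^(k+1) / (Nat.factorial (k+1) : ℂ)) •
          ((((n+k).descFactorial (k+1) : ℕ) : ℂ) • coeffT (n+k) u)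
        + ((-1 : ℂ)^(k+1) * b / (Nat.factorial k : ℂ)) •
          ((((n+k).descFactorial k : ℕ) : ℂ) • coeffT (n+k) u)
        + ∑ j ∈ Finset.range (k+1),
            ((-1 : ℂ)^j / ((Nat.factorial (k - j + 1) : ℂ) * (Nat.factorial j : ℂ))) •
              ((((n+j).descFactorial j : ℕ) : ℂ) • aE B (k-j) (coeffT (n+j) u)) := by
  show coeffT n ((cop B b (k+1)) u) = _
  rw [cop]
  simp only [LinearMap.add_apply, LinearMap.smul_apply, LinearMap.sum_apply, map_add, map_smul,
    map_sum]
  have e1 : coeffT n (LinearMap.lTensor M (TX * Dpow (k+1)) u)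
      = (((n+k).descFactorial (k+1) : ℕ) : ℂ) • coeffT (n+k) u := by
    have : n + (k+1) - 1 = n + k := by omega
    rw [coeffT_lTensor_TXDpow (k+1) n (by omega), this]
  rw [e1, coeffT_lTensor_Dpow]
  congr 1
  apply Finset.sum_congr rfl
  intro j _
  rw [coeffT_map_Dpow]

section Extractions
variable (B : BrData r M) (b : ℂ)

/-- split off the `j = 0` term when all `j ≥ 1` terms vanish -/
lemma sum_split1 {V : Type*} [AddCommGroup V] [Module ℂ V] (F : ℕ → V) (k : ℕ)
    (hF : ∀ j, 1 ≤ j → j ≤ k → F j = 0) :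
    ∑ j ∈ Finset.range (k+1), F j = F 0 := by
  rw [Finset.sum_range_succ']
  rw [Finset.sum_eq_zero (fun j hj => hF (j+1) (by omega) (by simp at hj; omega)), zero_add]

lemma sum_split2 {V : Type*} [AddCommGroup V] [Module ℂ V] (F : ℕ → V) (k : ℕ) (hk : 1 ≤ k)
    (hF : ∀ j, 2 ≤ j → j ≤ k → F j = 0) :
    ∑ j ∈ Finset.range (k+1), F j = F 0 + F 1 := by
  obtain ⟨k', rfl⟩ : ∃ k', k = k' + 1 := ⟨k - 1, by omega⟩
  rw [Finset.sum_range_succ']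
  rw [Finset.sum_range_succ']
  rw [Finset.sum_eq_zero (fun j hj => hF (j+2) (by omega) (by simp at hj; omega)), zero_add]
  exact add_comm _ _

/-- S1: each `cop (k+1)` does not raise degree -/
lemma cop_degLE (d : ℕ) (u : M ⊗[ℂ] Polynomial ℂ) (hd : ∀ j, d < j → coeffT j u = 0)
    (k : ℕ) : ∀ n, d < n → coeffT n (cop B b (k+1) u) = 0 := by
  intro n hn
  rw [coeffT_cop_succ]
  rw [hd (n+k) (by omega)]
  rw [Finset.sum_eq_zero (fun j _ => by rw [hd (n+j) (by omega)]; simp)]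
  simp

/-- S2: `cop (r+2)` strictly lowers degree -/
lemma cop_low (d : ℕ) (u : M ⊗[ℂ] Polynomial ℂ) (hd : ∀ j, d < j → coeffT j u = 0) :
    ∀ n, d ≤ n → coeffT n (cop B b (r+2) u) = 0 := by
  intro n hn
  rw [coeffT_cop_succ]
  rw [hd (n+(r+1)) (by omega)]
  have hsum : ∀ j ∈ Finset.range (r+2),
      ((-1 : ℂ)^j / ((Nat.factorial (r + 1 - j + 1) : ℂ) * (Nat.factorial j : ℂ))) •
        ((((n+j).descFactorial j : ℕ) : ℂ) • aE B (r+1-j) (coeffT (n+j) u)) = 0 := by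
    intro j hj
    rcases Nat.eq_zero_or_pos j with hj0 | hj0
    · subst hj0
      have h0 : aE B (r+1-0) = 0 := by rw [Nat.sub_zero, aE, dif_neg (by omega)]
      rw [h0]
      simp
    · rw [hd (n+j) (by omega)]
      simp
  rw [Finset.sum_eq_zero hsum]
  simp

/-- E1 for `i = 0` -/
lemma extract_top0 (d : ℕ) (u : M ⊗[ℂ] Polynomial ℂ) (hd : ∀ j, d < j → coeffT j u = 0) :
    coeffT d (cop B b 1 u) = aE B 0 (coeffT d u) - (((d:ℂ)) + b) • coeffT d u := by
  have : (1 : ℕ) = 0 + 1 := rfl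
  rw [this, coeffT_cop_succ]
  rw [sum_split1 _ 0 (fun j hj hj' => by omega)]
  simp only [Nat.add_zero, Nat.sub_zero, Nat.descFactorial_succ, Nat.descFactorial_zero]
  norm_num
  rw [sub_eq_add_neg]
  module

/-- E1 for `1 ≤ i ≤ r` -/
lemma extract_top (d : ℕ) (u : M ⊗[ℂ] Polynomial ℂ) (hd : ∀ j, d < j → coeffT j u = 0)
    (i : ℕ) (hi : 1 ≤ i) :
    coeffT d (cop B b (i+1) u) = (1 / (Nat.factorial (i+1) : ℂ)) • aE B i (coeffT d u) := by
  rw [coeffT_cop_succ]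
  rw [hd (d+i) (by omega)]
  rw [sum_split1 _ i (fun j hj hj' => by rw [hd (d+j) (by omega)]; simp)]
  simp

/-- extraction at level `n` from `cop 2`, for `u` of degree `≤ n+1` -/
lemma extract_sub1_k1 (n : ℕ) (u : M ⊗[ℂ] Polynomial ℂ) (hd : ∀ j, n+1 < j → coeffT j u = 0) :
    coeffT n (cop B b 2 u)
      = ((((n:ℂ)+1)*(n:ℂ)/2) + b*((n:ℂ)+1)) • coeffT (n+1) u
        + (1/2 : ℂ) • aE B 1 (coeffT n u)
        - (((n:ℂ)+1)) • aE B 0 (coeffT (n+1) u) := by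
  have h2 : (2 : ℕ) = 1 + 1 := rfl
  rw [h2, coeffT_cop_succ]
  rw [sum_split2 _ 1 le_rfl (fun j hj hj' => by omega)]
  simp only [Nat.descFactorial_succ, Nat.descFactorial_zero, Nat.descFactorial_one]
  push_cast
  norm_num [Nat.factorial]
  rw [sub_eq_add_neg]
  module

/-- extraction at level `n` from `cop (k+1)`, `k ≥ 2`, for `u` of degree `≤ n+1` -/
lemma extract_sub1 (n : ℕ) (u : M ⊗[ℂ] Polynomial ℂ) (hd : ∀ j, n+1 < j → coeffT j u = 0)
    (k : ℕ) (hk : 2 ≤ k) :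
    coeffT n (cop B b (k+1) u)
      = (-(((n:ℂ)+1)) / (Nat.factorial k : ℂ)) • aE B (k-1) (coeffT (n+1) u)
        + (1 / (Nat.factorial (k+1) : ℂ)) • aE B k (coeffT n u) := by
  rw [coeffT_cop_succ]
  rw [hd (n+k) (by omega)]
  rw [sum_split2 _ k (by omega) (fun j hj hj' => by rw [hd (n+j) (by omega)]; simp)]
  have e1 : k - 1 + 1 = k := by omega
  simp only [Nat.descFactorial_succ, Nat.descFactorial_zero, Nat.descFactorial_one, Nat.sub_zero,
    e1, Nat.add_zero]
  push_cast
  norm_num [Nat.factorial]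
  module

end Extractions

noncomputable def degSub (d : ℕ) : Submodule ℂ (M ⊗[ℂ] Polynomial ℂ) :=
  ⨅ (j : ℕ) (_ : d < j), LinearMap.ker (coeffT j)

lemma mem_degSub {d : ℕ} {u : M ⊗[ℂ] Polynomial ℂ} :
    u ∈ degSub d ↔ ∀ j, d < j → coeffT j u = 0 := by
  simp [degSub, Submodule.mem_iInf, LinearMap.mem_ker]

lemma chain_zero (B : BrData r M)
    (hstep : ∀ i, 1 ≤ i → i + 1 ≤ r → (∀ w, aE B (i+1) w = 0) → ∀ w, aE B i w = 0)
    (htop : ∀ w : M, aE B r w = 0) :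
    ∀ i, 1 ≤ i → i ≤ r → ∀ w : M, aE B i w = 0 := by
  suffices h : ∀ t, ∀ i, 1 ≤ i → i ≤ r → r - i = t → ∀ w : M, aE B i w = 0 by
    intro i h1 h2; exact h (r-i) i h1 h2 rfl
  intro t
  induction t with
  | zero =>
      intro i h1 h2 h3 w
      have : i = r := by omega
      subst this
      exact htop w
  | succ t ih =>
      intro i h1 h2 h3 w
      exact hstep i h1 (by omega) (fun w' => ih (i+1) (by omega) (by omega) (by omega) w') w

/-- if all `a_i`, `i ≥ 1`, vanish and `a_0` is a scalar, then `M` is finite-dimensional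
or not irreducible -/
lemma final_contradiction (B : BrData r M)
    (hirr : ∀ N : Submodule ℂ M, (∀ i : Fin (r + 1), ∀ v ∈ N, B.a i v ∈ N) → N = ⊥ ∨ N = ⊤)
    (hinf : ¬ FiniteDimensional ℂ M) (c₀ : ℂ)
    (h0 : ∀ w : M, aE B 0 w = c₀ • w)
    (h1 : ∀ i, 1 ≤ i → i ≤ r → ∀ w : M, aE B i w = 0) : False := by
  have hw : ∃ w : M, w ≠ 0 := by
    by_contra h
    push_neg at h
    have : Subsingleton M := ⟨fun a' b' => by rw [h a', h b']⟩
    exact hinf inferInstance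
  obtain ⟨w, hw0⟩ := hw
  have hinv : ∀ i : Fin (r + 1), ∀ v ∈ Submodule.span ℂ {w}, B.a i v ∈ Submodule.span ℂ {w} := by
    intro i v hv
    have hB : B.a i v = aE B (i : ℕ) v := by rw [aE_coe]
    rcases Nat.eq_zero_or_pos (i : ℕ) with hi | hi
    · rw [hB, hi, h0]
      exact Submodule.smul_mem _ _ hv
    · rw [hB, h1 (i:ℕ) hi (Fin.is_le i)]
      exact Submodule.zero_mem _
  rcases hirr _ hinv with h | h
  · have hmem := Submodule.mem_span_singleton_self (R := ℂ) w
    rw [h] at hmem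
    exact hw0 (by simpa using hmem)
  · have : FiniteDimensional ℂ (⊤ : Submodule ℂ M) := by
      rw [← h]
      exact FiniteDimensional.span_singleton ℂ w
    exact hinf Submodule.topEquiv.finiteDimensional

set_option maxHeartbeats 1000000 in
lemma main (B : BrData r M)
    (hirr : ∀ N : Submodule ℂ M, (∀ i : Fin (r + 1), ∀ v ∈ N, B.a i v ∈ N) → N = ⊥ ∨ N = ⊤)
    (hinf : ¬ FiniteDimensional ℂ M)
    (l : ℂ) (hl : l ≠ 0) (b : ℂ) :
    ∀ N : Submodule ℂ (M ⊗[ℂ] Polynomial ℂ),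
      (∀ m : ℤ, ∀ u ∈ N, DF B l b m u ∈ N) → N = ⊥ ∨ N = ⊤ := by
  intro N hN
  by_cases hbot : N = ⊥
  · left; exact hbot
  right
  have hcop : ∀ u ∈ N, ∀ k, cop B b k u ∈ N := cop_mem B l b hl N hN
  obtain ⟨u₀, hu₀N, hu₀⟩ := Submodule.exists_mem_ne_zero_of_ne_bot hbot
  have hex : ∃ d : ℕ, ∃ u, u ∈ N ∧ u ≠ 0 ∧ ∀ j, d < j → coeffT j u = 0 := by
    obtain ⟨D, hD, _⟩ := repr_exists u₀
    exact ⟨D, u₀, hu₀N, hu₀, fun j hj => hD j (by omega)⟩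
  classical
  have hdmin : ∃ d : ℕ, (∃ u, u ∈ N ∧ u ≠ 0 ∧ ∀ j, d < j → coeffT j u = 0) ∧
      (∀ u ∈ N, (∀ j, d ≤ j → coeffT j u = 0) → u = 0) := by
    refine ⟨Nat.find hex, Nat.find_spec hex, ?_⟩
    intro u hu hdeg
    by_contra hne
    rcases Nat.eq_zero_or_pos (Nat.find hex) with h0 | h0
    · exact hne (eq_zero_of_coeffT u (fun j => hdeg j (by omega)))
    · exact Nat.find_min hex (show Nat.find hex - 1 < Nat.find hex by omega)
        ⟨u, hu, hne, fun j hj => hdeg j (by omega)⟩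
  obtain ⟨d, ⟨u₁, hu₁N, hu₁ne, hu₁d⟩, hmin⟩ := hdmin
  have huniq : ∀ x : M ⊗[ℂ] Polynomial ℂ, x ∈ N → (∀ j, d < j → coeffT j x = 0) →
      coeffT d x = 0 → x = 0 := by
    intro x h1 h2 h3
    refine hmin x h1 (fun j hj => ?_)
    rcases Nat.eq_or_lt_of_le hj with heq | hlt
    · rw [← heq]; exact h3
    · exact h2 j hlt
  have hKinv : ∀ i : Fin (r + 1), ∀ w ∈ Submodule.map (coeffT d) (N ⊓ degSub d),
      B.a i w ∈ Submodule.map (coeffT d) (N ⊓ degSub d) := by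
    intro i w hw
    obtain ⟨u, huND, rfl⟩ := Submodule.mem_map.1 hw
    obtain ⟨huN, hud'⟩ := Submodule.mem_inf.1 huND
    have hud : ∀ j, d < j → coeffT j u = 0 := mem_degSub.1 hud'
    rw [← aE_coe]
    rcases Nat.eq_zero_or_pos (i : ℕ) with hi | hi
    · refine Submodule.mem_map.2 ⟨cop B b 1 u + (((d:ℂ)) + b) • u, ?_, ?_⟩
      · rw [Submodule.mem_inf, mem_degSub]
        constructor
        · exact N.add_mem (hcop u huN 1) (N.smul_mem _ huN)
        · intro j hj
          have h1 : coeffT j (cop B b 1 u) = 0 := by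
            have e : (1:ℕ) = 0 + 1 := rfl
            rw [e]
            exact cop_degLE B b d u hud 0 j hj
          rw [map_add, map_smul, h1, hud j hj, smul_zero, add_zero]
      · rw [map_add, map_smul, extract_top0 B b d u hud, hi, sub_add_cancel]
    · refine Submodule.mem_map.2 ⟨((Nat.factorial ((i:ℕ)+1) : ℂ)) • cop B b ((i:ℕ)+1) u, ?_, ?_⟩
      · rw [Submodule.mem_inf, mem_degSub]
        constructor
        · exact N.smul_mem _ (hcop u huN _)
        · intro j hj
          rw [map_smul, cop_degLE B b d u hud _ j hj, smul_zero]
      · rw [map_smul, extract_top B b d u hud (i:ℕ) hi, smul_smul, mul_one_div,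
          div_self (Nat.cast_ne_zero.2 (Nat.factorial_ne_zero _)), one_smul]
  have hKne : Submodule.map (coeffT d) (N ⊓ degSub d) ≠ ⊥ := by
    intro hKbot
    have hdK : coeffT d u₁ ∈ Submodule.map (coeffT d) (N ⊓ degSub d) :=
      Submodule.mem_map.2 ⟨u₁, Submodule.mem_inf.2 ⟨hu₁N, mem_degSub.2 hu₁d⟩, rfl⟩
    rw [hKbot] at hdK
    exact hu₁ne (huniq u₁ hu₁N hu₁d (by simpa using hdK))
  have hKtop : Submodule.map (coeffT d) (N ⊓ degSub d) = ⊤ :=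
    (hirr _ hKinv).resolve_left hKne
  rcases Nat.eq_zero_or_pos d with hd0 | hd1
  · -- d = 0 : N = ⊤
    subst hd0
    have hM1 : ∀ w : M, w ⊗ₜ[ℂ] (1 : Polynomial ℂ) ∈ N := by
      intro w
      have hwK : w ∈ Submodule.map (coeffT 0) (N ⊓ degSub 0) := by rw [hKtop]; trivial
      obtain ⟨u, huND, hcw⟩ := Submodule.mem_map.1 hwK
      obtain ⟨huN, hud'⟩ := Submodule.mem_inf.1 huND
      have hud : ∀ j, 0 < j → coeffT j u = 0 := mem_degSub.1 hud'
      have hrep := repr_of_degLE u 0 hud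
      rw [Finset.sum_range_one, hcw, pow_zero] at hrep
      rw [← hrep]
      exact huN
    have hMn : ∀ (n : ℕ) (w : M), w ⊗ₜ[ℂ] (X^n : Polynomial ℂ) ∈ N := by
      intro n
      induction n with
      | zero => intro w; simpa [pow_zero] using hM1 w
      | succ n ih =>
          intro w
          have h := hcop _ (ih w) 0
          rw [cop_zero_tmul, ← pow_succ'] at h
          exact h
    rw [eq_top_iff]
    intro u _
    obtain ⟨D, hD, hrep⟩ := repr_exists u
    rw [hrep]
    exact Submodule.sum_mem N (fun j _ => hMn j _)
  · -- d ≥ 1 : contradiction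
    exfalso
    obtain ⟨d', rfl⟩ : ∃ d', d = d' + 1 := ⟨d - 1, by omega⟩
    -- the section map S
    set L : (N ⊓ degSub (d'+1) : Submodule ℂ (M ⊗[ℂ] Polynomial ℂ)) →ₗ[ℂ] M :=
      (coeffT (d'+1)) ∘ₗ (Submodule.subtype _) with hL
    have hbij : Function.Bijective L := by
      constructor
      · rw [injective_iff_map_eq_zero]
        intro x hx
        have hxN : (x : M ⊗[ℂ] Polynomial ℂ) ∈ N := (Submodule.mem_inf.1 x.2).1
        have hxd : ∀ j, d'+1 < j → coeffT j (x : M ⊗[ℂ] Polynomial ℂ) = 0 :=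
          mem_degSub.1 (Submodule.mem_inf.1 x.2).2
        have hx0 : (x : M ⊗[ℂ] Polynomial ℂ) = 0 := huniq _ hxN hxd hx
        exact Subtype.ext hx0
      · intro w
        have hwK : w ∈ Submodule.map (coeffT (d'+1)) (N ⊓ degSub (d'+1)) := by
          rw [hKtop]; trivial
        obtain ⟨u, hu, hcu⟩ := Submodule.mem_map.1 hwK
        exact ⟨⟨u, hu⟩, hcu⟩
    set e := LinearEquiv.ofBijective L hbij with he
    set S : M →ₗ[ℂ] M ⊗[ℂ] Polynomial ℂ :=
      (Submodule.subtype _) ∘ₗ (e.symm : M →ₗ[ℂ] (N ⊓ degSub (d'+1) : Submodule ℂ (M ⊗[ℂ] Polynomial ℂ))) with hS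
    have hSN : ∀ w, S w ∈ N := fun w => (Submodule.mem_inf.1 (e.symm w).2).1
    have hSdeg : ∀ w, ∀ j, d'+1 < j → coeffT j (S w) = 0 :=
      fun w => mem_degSub.1 (Submodule.mem_inf.1 (e.symm w).2).2
    have hScoeff : ∀ w, coeffT (d'+1) (S w) = w := fun w => e.apply_symm_apply w
    -- KS identities
    have hKS : ∀ i, 1 ≤ i → ∀ w, cop B b (i+1) (S w)
        = (1 / (Nat.factorial (i+1) : ℂ)) • S (aE B i w) := by
      intro i h1 w
      have hx : cop B b (i+1) (S w) - (1 / (Nat.factorial (i+1) : ℂ)) • S (aE B i w) = 0 := by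
        apply huniq
        · exact N.sub_mem (hcop _ (hSN w) _) (N.smul_mem _ (hSN _))
        · intro j hj
          rw [map_sub, map_smul, cop_degLE B b (d'+1) (S w) (hSdeg w) i j hj,
            hSdeg _ j hj, smul_zero, sub_zero]
        · rw [map_sub, map_smul, extract_top B b (d'+1) (S w) (hSdeg w) i h1, hScoeff, hScoeff,
            sub_self]
      exact sub_eq_zero.1 hx
    have hKR : ∀ w, cop B b (r+2) (S w) = 0 := by
      intro w
      apply huniq
      · exact hcop _ (hSN w) _
      · intro j hj
        exact cop_low B b (d'+1) (S w) (hSdeg w) j (by omega)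
      · exact cop_low B b (d'+1) (S w) (hSdeg w) (d'+1) le_rfl
    have hd1C : ((d':ℂ) + 1) ≠ 0 := by
      have : ((d':ℂ) + 1) = ((d' + 1 : ℕ) : ℂ) := by push_cast; ring
      rw [this]
      exact Nat.cast_ne_zero.2 (by omega)
    -- step of the downward chain
    have hstep : ∀ i, 1 ≤ i → i + 1 ≤ r → (∀ w, aE B (i+1) w = 0) → ∀ w, aE B i w = 0 := by
      intro i h1 h2 hz w
      have h := hKS (i+1) (by omega) w
      rw [hz w, map_zero, smul_zero] at h
      have hc := congrArg (coeffT d') h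
      rw [extract_sub1 B b d' (S w) (hSdeg w) (i+1) (by omega), hScoeff, hz, map_zero,
        smul_zero, add_zero] at hc
      simp only [Nat.add_sub_cancel] at hc
      have hcoef : (-((d':ℂ)+1) / (Nat.factorial (i+1) : ℂ)) ≠ 0 := by
        apply div_ne_zero
        · exact neg_ne_zero.2 hd1C
        · exact Nat.cast_ne_zero.2 (Nat.factorial_ne_zero _)
      exact (smul_eq_zero.1 hc).resolve_left hcoef
    -- scalar value of a₀
    have hsc : ∀ w, (((d':ℂ)+1)*(d':ℂ)/2 + b*((d':ℂ)+1)) • w - (((d':ℂ)+1)) • aE B 0 w = 0 →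
        aE B 0 w = ((d':ℂ)/2 + b) • w := by
      intro w hw
      have h2 : (((d':ℂ)+1)) • aE B 0 w = (((d':ℂ)+1)*(d':ℂ)/2 + b*((d':ℂ)+1)) • w := by
        rw [← sub_eq_zero]
        rw [← neg_sub]
        rw [hw]
        exact neg_zero
      have h3 : aE B 0 w = ((((d':ℂ)+1))⁻¹ * ((((d':ℂ)+1)*(d':ℂ)/2 + b*((d':ℂ)+1)))) • w := by
        rw [mul_smul, ← h2, inv_smul_smul₀ hd1C]
      rw [h3]
      congr 1
      field_simp
    rcases Nat.eq_zero_or_pos r with hr0 | hr1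
    · -- r = 0
      subst hr0
      have h0 : ∀ w, aE B 0 w = ((d':ℂ)/2 + b) • w := by
        intro w
        have h := congrArg (coeffT d') (hKR w)
        rw [show (0+2 : ℕ) = 2 from rfl] at h
        rw [extract_sub1_k1 B b d' (S w) (hSdeg w), hScoeff, map_zero] at h
        have ha1 : aE B 1 = 0 := by rw [aE]; rw [dif_neg (by omega)]
        rw [ha1] at h
        simp only [LinearMap.zero_apply, smul_zero, add_zero] at h
        exact hsc w h
      exact final_contradiction B hirr hinf _ h0 (fun i hi hir w => by omega)
    · -- r ≥ 1
      have htop : ∀ w, aE B r w = 0 := by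
        intro w
        have h := congrArg (coeffT d') (hKR w)
        have e2 : (r+2 : ℕ) = (r+1) + 1 := rfl
        rw [e2, extract_sub1 B b d' (S w) (hSdeg w) (r+1) (by omega), hScoeff, map_zero] at h
        simp only [Nat.add_sub_cancel] at h
        have ha1 : aE B (r+1) = 0 := by rw [aE]; rw [dif_neg (by omega)]
        rw [ha1] at h
        simp only [LinearMap.zero_apply, smul_zero, add_zero] at h
        have hcoef : (-((d':ℂ)+1) / (Nat.factorial (r+1) : ℂ)) ≠ 0 := by
          apply div_ne_zero
          · exact neg_ne_zero.2 hd1C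
          · exact Nat.cast_ne_zero.2 (Nat.factorial_ne_zero _)
        exact (smul_eq_zero.1 h).resolve_left hcoef
      have hall : ∀ i, 1 ≤ i → i ≤ r → ∀ w : M, aE B i w = 0 := chain_zero B hstep htop
      have h0 : ∀ w, aE B 0 w = ((d':ℂ)/2 + b) • w := by
        intro w
        have h := hKS 1 le_rfl w
        rw [hall 1 le_rfl hr1 w, map_zero, smul_zero] at h
        have hc := congrArg (coeffT d') h
        rw [extract_sub1_k1 B b d' (S w) (hSdeg w), hScoeff, map_zero] at hc
        rw [hall 1 le_rfl hr1] at hc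
        simp only [smul_zero, add_zero] at hc
        exact hsc w hc
      exact final_contradiction B hirr hinf _ h0 hall


end FOmega

/-- for irreducible `𝓑_r`-data on an infinite-dimensional space `M` and `λ ≠ 0`,
the Virasoro module `F(M, Ω(λ,β))` is irreducible. -/
theorem F_omega_irreducible {r : ℕ} {M : Type*} [AddCommGroup M] [Module ℂ M]
    (B : BrData r M)
    (hirr : ∀ N : Submodule ℂ M, (∀ i : Fin (r + 1), ∀ v ∈ N, B.a i v ∈ N) → N = ⊥ ∨ N = ⊤)
    (hinf : ¬ FiniteDimensional ℂ M)
    (l : ℂ) (hl : l ≠ 0) (b : ℂ) :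
    ∀ N : Submodule ℂ (M ⊗[ℂ] Polynomial ℂ),
      (∀ m : ℤ, ∀ u ∈ N, DF B l b m u ∈ N) → N = ⊥ ∨ N = ⊤ := by
  intro N hN
  exact FOmega.main B hirr hinf l hl b N hN
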